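/- Let L be a residuated lattice. For u, x ∈ L define λ_u(x) = (u\(x·u)) ∧ e, ρ_u(x) = ((u·x)/u) ∧ e, λ*_u(x) = ((x\u)\u) ∧ e, and ρ*_u(x) = (u/(u/x)) ∧ e. Then for all x, y ∈ L: (λ_u(x) ∨ ρ_v(y) = e for all u, v ∈ L) if and only if (λ*_u(x) ∨ ρ*_v(y) = e for all u, v ∈ L). In particular, the inequalities λ*_{x·u}(x) ≤ λ_u(x), λ_{x\u}(x) ≤ λ*_u(x), ρ*_{u·x}(x) ≤ ρ_u(x), and ρ_{u/x}(x) ≤ ρ*_u(x) hold in every residuated lattice. -/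
import Mathlib


universe u

/-- A residuated lattice: a lattice-ordered monoid with left and right residuals.
`ldiv x z` is `x \ z` and `rdiv z y` is `z / y`. -/
class ResiduatedLattice (α : Type u) extends Lattice α, Monoid α where
  ldiv : α → α → α
  rdiv : α → α → α
  mul_le_iff_le_ldiv : ∀ x y z : α, x * y ≤ z ↔ y ≤ ldiv x z
  mul_le_iff_le_rdiv : ∀ x y z : α, x * y ≤ z ↔ x ≤ rdiv z y

namespace ResiduatedLattice

variable {α : Type u} [ResiduatedLattice α]

/-- `L` is e-cyclic if `x \ e = e / x` for all `x`. -/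
def ECyclic (α : Type u) [ResiduatedLattice α] : Prop :=
  ∀ x : α, ldiv x 1 = rdiv 1 x

/-- Absolute value: `|x| = x ⊓ (e / x) ⊓ e`. -/
def absv (x : α) : α := x ⊓ rdiv 1 x ⊓ 1

/-- A convex subalgebra: contains `e`, closed under all the operations, and order-convex. -/
structure IsConvexSubalgebra (H : Set α) : Prop where
  one_mem : (1 : α) ∈ H
  mul_mem : ∀ ⦃x⦄, x ∈ H → ∀ ⦃y⦄, y ∈ H → x * y ∈ H
  sup_mem : ∀ ⦃x⦄, x ∈ H → ∀ ⦃y⦄, y ∈ H → x ⊔ y ∈ H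
  inf_mem : ∀ ⦃x⦄, x ∈ H → ∀ ⦃y⦄, y ∈ H → x ⊓ y ∈ H
  ldiv_mem : ∀ ⦃x⦄, x ∈ H → ∀ ⦃y⦄, y ∈ H → ldiv x y ∈ H
  rdiv_mem : ∀ ⦃x⦄, x ∈ H → ∀ ⦃y⦄, y ∈ H → rdiv x y ∈ H
  convex : ∀ ⦃a⦄, a ∈ H → ∀ ⦃b⦄, b ∈ H → ∀ ⦃x⦄, a ≤ x → x ≤ b → x ∈ H

/-- `C[S]`: the smallest convex subalgebra containing `S`. -/
def convexClosure (S : Set α) : Set α :=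
  ⋂₀ {H : Set α | IsConvexSubalgebra H ∧ S ⊆ H}

end ResiduatedLattice

open ResiduatedLattice

/-- Left conjugation `λ_u(x) = (u\(x·u)) ⊓ e`. -/
def lam {α : Type u} [ResiduatedLattice α] (u x : α) : α := ldiv u (x * u) ⊓ 1

/-- Right conjugation `ρ_u(x) = ((u·x)/u) ⊓ e`. -/
def rho {α : Type u} [ResiduatedLattice α] (u x : α) : α := rdiv (u * x) u ⊓ 1

/-- `λ*_u(x) = ((x\u)\u) ⊓ e`. -/
def lamStar {α : Type u} [ResiduatedLattice α] (u x : α) : α := ldiv (ldiv x u) u ⊓ 1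

/-- `ρ*_u(x) = (u/(u/x)) ⊓ e`. -/
def rhoStar {α : Type u} [ResiduatedLattice α] (u x : α) : α := rdiv u (rdiv u x) ⊓ 1


section Aux
variable {α : Type u} [ResiduatedLattice α]

lemma mul_ldiv_le (x z : α) : x * ldiv x z ≤ z :=
  (mul_le_iff_le_ldiv x (ldiv x z) z).mpr le_rfl

lemma rdiv_mul_le (z y : α) : rdiv z y * y ≤ z :=
  (mul_le_iff_le_rdiv (rdiv z y) y z).mpr le_rfl

lemma rl_mul_le_mul_right {a b : α} (h : a ≤ b) (t : α) : a * t ≤ b * t :=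
  (mul_le_iff_le_rdiv a t (b*t)).mpr (h.trans ((mul_le_iff_le_rdiv b t (b*t)).mp le_rfl))

lemma rl_mul_le_mul_left {a b : α} (h : a ≤ b) (t : α) : t * a ≤ t * b :=
  (mul_le_iff_le_ldiv t a (t*b)).mpr (h.trans ((mul_le_iff_le_ldiv t b (t*b)).mp le_rfl))

lemma ldiv_le_ldiv_left {a b : α} (h : a ≤ b) (c : α) : ldiv c a ≤ ldiv c b :=
  (mul_le_iff_le_ldiv c (ldiv c a) b).mp ((mul_ldiv_le c a).trans h)

lemma ldiv_le_ldiv_right {a b : α} (h : a ≤ b) (c : α) : ldiv b c ≤ ldiv a c :=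
  (mul_le_iff_le_ldiv a (ldiv b c) c).mp
    ((rl_mul_le_mul_right h _).trans (mul_ldiv_le b c))

lemma rdiv_le_rdiv_left {a b : α} (h : a ≤ b) (c : α) : rdiv a c ≤ rdiv b c :=
  (mul_le_iff_le_rdiv (rdiv a c) c b).mp ((rdiv_mul_le a c).trans h)

lemma rdiv_le_rdiv_right {a b : α} (h : a ≤ b) (c : α) : rdiv c b ≤ rdiv c a :=
  (mul_le_iff_le_rdiv (rdiv c b) a c).mp
    ((rl_mul_le_mul_left h _).trans (rdiv_mul_le c b))

lemma lamStar_mul_le (x u : α) : lamStar (x * u) x ≤ lam u x := by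
  refine inf_le_inf_right 1 (ldiv_le_ldiv_right ?_ _)
  exact (mul_le_iff_le_ldiv x u (x*u)).mp le_rfl

lemma lam_ldiv_le (x u : α) : lam (ldiv x u) x ≤ lamStar u x :=
  inf_le_inf_right 1 (ldiv_le_ldiv_left (mul_ldiv_le x u) _)

lemma rhoStar_mul_le (x u : α) : rhoStar (u * x) x ≤ rho u x := by
  refine inf_le_inf_right 1 (rdiv_le_rdiv_right ?_ _)
  exact (mul_le_iff_le_rdiv u x (u*x)).mp le_rfl

lemma rho_rdiv_le (x u : α) : rho (rdiv u x) x ≤ rhoStar u x :=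
  inf_le_inf_right 1 (rdiv_le_rdiv_left (rdiv_mul_le u x) _)

end Aux

/-- the condition `λ_u(x) ⊔ ρ_v(y) = e (∀ u, v)` is equivalent to
`λ*_u(x) ⊔ ρ*_v(y) = e (∀ u, v)`; and the four comparison inequalities between
conjugations and `*`-conjugations hold in every residuated lattice. -/

theorem stmt18 {α : Type u} [ResiduatedLattice α] :
    (∀ x y : α,
      (∀ u v : α, lam u x ⊔ rho v y = 1) ↔ (∀ u v : α, lamStar u x ⊔ rhoStar v y = 1)) ∧
    (∀ x u : α, lamStar (x * u) x ≤ lam u x) ∧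
    (∀ x u : α, lam (ldiv x u) x ≤ lamStar u x) ∧
    (∀ x u : α, rhoStar (u * x) x ≤ rho u x) ∧
    (∀ x u : α, rho (rdiv u x) x ≤ rhoStar u x) := by
  refine ⟨fun x y => ⟨fun h u v => ?_, fun h u v => ?_⟩,
    lamStar_mul_le, lam_ldiv_le, rhoStar_mul_le, rho_rdiv_le⟩
  · exact le_antisymm (sup_le inf_le_right inf_le_right)
      ((h (ldiv x u) (rdiv v y)).symm.le.trans
        (sup_le_sup (lam_ldiv_le x u) (rho_rdiv_le y v)))
  · exact le_antisymm (sup_le inf_le_right inf_le_right)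
      ((h (x * u) (v * y)).symm.le.trans
        (sup_le_sup (lamStar_mul_le x u) (rhoStar_mul_le y v)))
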